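/- For a ∈ {0,1} and every b ∈ ℚ₂, the integral of ψ(b·x₁x₂) over the translated set (1/2,1/2) + M_a = {(x₁,x₂) ∈ ℚ₂² : ‖x₁ − 1/2‖ ≤ 1, ‖x₂ − 1/2‖ ≤ 1, ‖x₁ + x₂ − 1 − a‖ ≤ 1/2} with respect to μ×μ equals (1/2)·ψ(((1+2a)/4)·b) if ‖b‖ ≤ 1, and equals 0 if ‖b‖ > 1. (This is the computation of J̃_a(b) in the proof of Lemma 5.5(3), which shows the corresponding Whittaker function is the constant (1/2)γ(W) supported on t ∈ (1+2a)/4 + ℤ₂.) -/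

import Mathlib

open MeasureTheory

/-- The translated set `(1/2,1/2) + M_a` from the proof of Lemma 5.5(3). -/
def MsetShift (a : ℕ) : Set (ℚ_[2] × ℚ_[2]) :=
  {p | ‖p.1 - 2⁻¹‖ ≤ 1 ∧ ‖p.2 - 2⁻¹‖ ≤ 1 ∧ ‖p.1 + p.2 - 1 - (a : ℚ_[2])‖ ≤ 1 / 2}

open Set

namespace Stmt12Aux

lemma norm_two' : ‖(2:ℚ_[2])‖ = 2⁻¹ := by simpa using Padic.norm_p (p := 2)

lemma norm_half : ‖(2⁻¹:ℚ_[2])‖ = 2 := by rw [norm_inv, norm_two', inv_inv]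

lemma norm_ge_two {b : ℚ_[2]} (hb : ¬ ‖b‖ ≤ 1) : 2 ≤ ‖b‖ := by
  have h := (Padic.norm_le_pow_iff_norm_lt_pow_add_one b 0)
  simp only [zpow_zero, zero_add, zpow_one] at h
  push_cast at h
  by_contra hc
  exact hb (h.2 (by push_neg at hc; exact hc))

lemma dich (x : ℚ_[2]) (hx : ‖x‖ ≤ 1) : ‖x‖ ≤ 1/2 ∨ ‖x - 1‖ ≤ 1/2 := by
  set z : ℤ_[2] := ⟨x, hx⟩ with hzdef
  have hlt : z.appr 1 < 2 := by simpa using z.appr_lt 1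
  have hsp : ‖z - (z.appr 1 : ℤ_[2])‖ ≤ ((2:ℕ):ℝ) ^ (-(1:ℕ):ℤ) :=
    (PadicInt.norm_le_pow_iff_mem_span_pow _ 1).2 (by simpa using z.appr_spec 1)
  have hco : ‖x - (z.appr 1 : ℚ_[2])‖ ≤ 1/2 := by
    have h1 : ((z - (z.appr 1 : ℤ_[2]) : ℤ_[2]) : ℚ_[2]) = x - (z.appr 1 : ℚ_[2]) := by
      push_cast [hzdef]; rfl
    calc ‖x - (z.appr 1 : ℚ_[2])‖ = ‖z - (z.appr 1 : ℤ_[2])‖ := by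
          rw [PadicInt.norm_def, h1]
      _ ≤ ((2:ℕ):ℝ) ^ (-(1:ℕ):ℤ) := hsp
      _ = 1/2 := by norm_num
  interval_cases h : z.appr 1
  · left; simpa using hco
  · right; simpa using hco

section

variable [MeasurableSpace ℚ_[2]] [BorelSpace ℚ_[2]]
variable (μ : Measure ℚ_[2]) [μ.IsAddHaarMeasure]

lemma ball_eq (c : ℚ_[2]) (r : ℝ) :
    {x : ℚ_[2] | ‖x - c‖ ≤ r} = Metric.closedBall c r := by
  ext x; simp [Metric.mem_closedBall, dist_eq_norm]

lemma meas_ball (c : ℚ_[2]) (r : ℝ) : MeasurableSet {x : ℚ_[2] | ‖x - c‖ ≤ r} := by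
  rw [ball_eq]; exact measurableSet_closedBall

lemma meas_translate (c : ℚ_[2]) (r : ℝ) :
    μ {x : ℚ_[2] | ‖x - c‖ ≤ r} = μ {x : ℚ_[2] | ‖x‖ ≤ r} := by
  have : {x : ℚ_[2] | ‖x - c‖ ≤ r} = (fun x => x + -c) ⁻¹' {x : ℚ_[2] | ‖x‖ ≤ r} := by
    ext x; simp [sub_eq_add_neg]
  rw [this, measure_preimage_add_right]

lemma meas_unit_ball (hμ : μ {x : ℚ_[2] | ‖x‖ ≤ 1} = 1) (c : ℚ_[2]) :
    μ {x : ℚ_[2] | ‖x - c‖ ≤ 1} = 1 := by rw [meas_translate, hμ]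

lemma meas_half_ball (hμ : μ {x : ℚ_[2] | ‖x‖ ≤ 1} = 1) (c : ℚ_[2]) :
    μ {x : ℚ_[2] | ‖x - c‖ ≤ 1/2} = 1/2 := by
  rw [meas_translate]
  have hunion : {x : ℚ_[2] | ‖x‖ ≤ 1}
      = {x : ℚ_[2] | ‖x‖ ≤ 1/2} ∪ {x : ℚ_[2] | ‖x - 1‖ ≤ 1/2} := by
    apply Set.Subset.antisymm
    · intro x hx
      rcases dich x hx with h | h
      · exact Or.inl h
      · exact Or.inr h
    · rintro x (h | h)
      · simp only [mem_setOf_eq] at h ⊢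
        exact le_trans h (by norm_num)
      · simp only [mem_setOf_eq] at h ⊢
        have hx : x = (x - 1) + 1 := by ring
        rw [hx]
        refine le_trans (Padic.nonarchimedean _ _) (max_le (le_trans h (by norm_num)) ?_)
        simp
  have hdisj : Disjoint {x : ℚ_[2] | ‖x‖ ≤ 1/2} {x : ℚ_[2] | ‖x - 1‖ ≤ 1/2} := by
    rw [Set.disjoint_left]
    intro x h1 h2
    simp only [mem_setOf_eq] at h1 h2
    have hx : (1:ℚ_[2]) = x + -(x - 1) := by ring
    have hn : ‖(1:ℚ_[2])‖ ≤ 1/2 := by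
      rw [hx]
      refine le_trans (Padic.nonarchimedean _ _) (max_le h1 (by rw [norm_neg]; exact h2))
    rw [norm_one] at hn; norm_num at hn
  have htrans : μ {x : ℚ_[2] | ‖x - 1‖ ≤ 1/2} = μ {x : ℚ_[2] | ‖x‖ ≤ 1/2} := by
    have h := meas_translate μ 1 (1/2)
    simpa using h
  have hsum : μ {x : ℚ_[2] | ‖x‖ ≤ 1/2} + μ {x : ℚ_[2] | ‖x - 1‖ ≤ 1/2} = 1 := by
    rw [← measure_union hdisj (meas_ball 1 (1/2)), ← hunion, hμ]
  rw [htrans] at hsum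
  have h2 : 2 * μ {x : ℚ_[2] | ‖x‖ ≤ 1/2} = 1 := by rw [two_mul]; exact hsum
  have hkey : μ {x : ℚ_[2] | ‖x‖ ≤ 1/2} = 2⁻¹ * (2 * μ {x : ℚ_[2] | ‖x‖ ≤ 1/2}) := by
    rw [← mul_assoc, ENNReal.inv_mul_cancel (by norm_num) (by norm_num), one_mul]
  rw [hkey, h2, mul_one, one_div]

lemma vanish (ψ : ℚ_[2] → ℂ)
    (hψadd : ∀ x y : ℚ_[2], ψ (x + y) = ψ x * ψ y)
    (hψhalf : ψ (2⁻¹ : ℚ_[2]) = -1)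
    (β c : ℚ_[2]) (hβ : 4 ≤ ‖β‖) :
    ∫ x in {x : ℚ_[2] | ‖x - c‖ ≤ 1/2}, ψ (β * x) ∂μ = 0 := by
  have hβ0 : β ≠ 0 := by rintro rfl; norm_num at hβ
  set t : ℚ_[2] := (2 * β)⁻¹ with htdef
  have hβt : β * t = 2⁻¹ := by rw [htdef]; field_simp
  have ht : ‖t‖ ≤ 1/2 := by
    rw [htdef, norm_inv, norm_mul, norm_two']
    rw [show (1:ℝ)/2 = 2⁻¹ by norm_num, inv_le_inv₀ (by positivity) (by norm_num)]
    nlinarith [hβ]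
  set S := {x : ℚ_[2] | ‖x - c‖ ≤ 1/2} with hSdef
  have hpre : (fun x => x + t) ⁻¹' S = S := by
    ext x
    simp only [mem_preimage, hSdef, mem_setOf_eq]
    constructor
    · intro h
      have hx : x - c = (x + t - c) + -t := by ring
      rw [hx]
      refine le_trans (Padic.nonarchimedean _ _) (max_le h (by simpa using ht))
    · intro h
      have hx : x + t - c = (x - c) + t := by ring
      rw [hx]
      exact le_trans (Padic.nonarchimedean _ _) (max_le h ht)
  have key : ∫ x in S, ψ (β * (x + t)) ∂μ = ∫ x in S, ψ (β * x) ∂μ := by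
    conv_lhs => rw [← hpre]
    exact (measurePreserving_add_right μ t).setIntegral_preimage_emb
      (MeasurableEquiv.addRight t).measurableEmbedding (fun x => ψ (β * x)) S
  have expand : ∀ x : ℚ_[2], ψ (β * (x + t)) = -(ψ (β * x)) := by
    intro x
    rw [mul_add, hψadd, hβt, hψhalf, mul_neg, mul_one]
  rw [show (fun x => ψ (β * (x + t))) = fun x => -(ψ (β * x)) from funext expand,
    integral_neg] at key
  have h2I : (2:ℂ) * ∫ x in S, ψ (β * x) ∂μ = 0 := by linear_combination -key
  exact (mul_eq_zero.mp h2I).resolve_left two_ne_zero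

end

end Stmt12Aux

open Stmt12Aux in
/-- **Paper, proof of Lemma 5.5(3):** the formula for `J̃_a(b)`: for `a ∈ {0,1}`,
`∫_{(1/2,1/2)+M_a} ψ(b x₁ x₂) d(μ×μ)` equals `(1/2)ψ(((1+2a)/4)b)` when `‖b‖ ≤ 1`
and `0` when `‖b‖ > 1`. -/
theorem stmt12 [MeasurableSpace ℚ_[2]] [BorelSpace ℚ_[2]]
    (μ : Measure ℚ_[2]) [μ.IsAddHaarMeasure] [SigmaFinite μ]
    (hμ : μ {x : ℚ_[2] | ‖x‖ ≤ 1} = 1)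
    (ψ : ℚ_[2] → ℂ) (hψcont : Continuous ψ)
    (hψadd : ∀ x y : ℚ_[2], ψ (x + y) = ψ x * ψ y)
    (hψtriv : ∀ x : ℚ_[2], ‖x‖ ≤ 1 → ψ x = 1)
    (hψhalf : ψ (2⁻¹ : ℚ_[2]) = -1)
    (a : ℕ) (ha : a = 0 ∨ a = 1) (b : ℚ_[2]) :
    (∫ p in MsetShift a, ψ (b * p.1 * p.2) ∂(μ.prod μ))
      = if ‖b‖ ≤ 1 then (1 / 2 : ℂ) * ψ (((1 + 2 * (a : ℚ_[2])) / 4) * b) else 0 := by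
  classical
  have hanorm : ‖((a : ℕ) : ℚ_[2])‖ ≤ 1 := by rcases ha with rfl | rfl <;> simp
  set A : Set ℚ_[2] := {x | ‖x - 2⁻¹‖ ≤ 1} with hAdef
  have hAmeas : MeasurableSet A := meas_ball _ _
  have hTclosed : IsClosed (MsetShift a) := by
    have h1 : IsClosed {p : ℚ_[2] × ℚ_[2] | ‖p.1 - 2⁻¹‖ ≤ 1} :=
      isClosed_le (Continuous.norm (by fun_prop)) continuous_const
    have h2 : IsClosed {p : ℚ_[2] × ℚ_[2] | ‖p.2 - 2⁻¹‖ ≤ 1} :=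
      isClosed_le (Continuous.norm (by fun_prop)) continuous_const
    have h3 : IsClosed {p : ℚ_[2] × ℚ_[2] | ‖p.1 + p.2 - 1 - (a : ℚ_[2])‖ ≤ 1 / 2} :=
      isClosed_le (Continuous.norm (by fun_prop)) continuous_const
    exact h1.inter (h2.inter h3)
  have hTmeas : MeasurableSet (MsetShift a) := hTclosed.measurableSet
  have hAcomp : IsCompact A := by rw [hAdef, ball_eq]; exact isCompact_closedBall _ _
  have hsubset : MsetShift a ⊆ A ×ˢ A := by
    rintro ⟨x, y⟩ ⟨h1, h2, h3⟩; exact ⟨h1, h2⟩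
  have hTcomp : IsCompact (MsetShift a) :=
    (hAcomp.prod hAcomp).of_isClosed_subset hTclosed hsubset
  have hfcont : Continuous (fun p : ℚ_[2] × ℚ_[2] => ψ (b * p.1 * p.2)) :=
    hψcont.comp (by fun_prop)
  have hTfin : μ.prod μ (MsetShift a) ≠ ⊤ := by
    have hle : μ.prod μ (MsetShift a) ≤ μ.prod μ (A ×ˢ A) := measure_mono hsubset
    rw [Measure.prod_prod, meas_unit_ball μ hμ, mul_one] at hle
    exact ne_top_of_le_ne_top ENNReal.one_ne_top hle
  obtain ⟨C, hC⟩ := hTcomp.exists_bound_of_continuousOn hfcont.continuousOn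
  have hInt : IntegrableOn (fun p : ℚ_[2] × ℚ_[2] => ψ (b * p.1 * p.2))
      (MsetShift a) (μ.prod μ) := by
    refine Measure.integrableOn_of_bounded (M := C) hTfin hfcont.aestronglyMeasurable ?_
    exact (ae_restrict_iff' hTmeas).2 (ae_of_all _ hC)
  have hFint : Integrable ((MsetShift a).indicator fun p : ℚ_[2] × ℚ_[2] =>
      ψ (b * p.1 * p.2)) (μ.prod μ) := (integrable_indicator_iff hTmeas).2 hInt
  rw [← integral_indicator hTmeas, MeasureTheory.integral_prod _ hFint]
  have hmem : ∀ x y : ℚ_[2], x ∈ A →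
      ((x, y) ∈ MsetShift a ↔ ‖y - (1 + (a : ℚ_[2]) - x)‖ ≤ 1 / 2) := by
    intro x y hx
    simp only [MsetShift, Set.mem_setOf_eq]
    have hxA : ‖x - 2⁻¹‖ ≤ 1 := hx
    constructor
    · rintro ⟨h1, h2, h3⟩
      have h4 : y - (1 + (a : ℚ_[2]) - x) = x + y - 1 - (a : ℚ_[2]) := by ring
      rw [h4]; exact h3
    · intro h
      refine ⟨hxA, ?_, ?_⟩
      · have h4 : y - 2⁻¹ = (y - (1 + (a : ℚ_[2]) - x)) + (-(x - 2⁻¹) + (a : ℚ_[2])) := by ring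
        rw [h4]
        refine le_trans (Padic.nonarchimedean _ _)
          (max_le (le_trans h (by norm_num)) ?_)
        refine le_trans (Padic.nonarchimedean _ _)
          (max_le (by rw [norm_neg]; exact hxA) hanorm)
      · have h4 : x + y - 1 - (a : ℚ_[2]) = y - (1 + (a : ℚ_[2]) - x) := by ring
        rw [h4]; exact h
  have hSmeas : ∀ c : ℚ_[2], MeasurableSet {y : ℚ_[2] | ‖y - c‖ ≤ 1 / 2} :=
    fun c => meas_ball c _
  have inner_eq : ∀ x : ℚ_[2],
      (∫ y, (MsetShift a).indicator (fun p => ψ (b * p.1 * p.2)) (x, y) ∂μ)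
      = A.indicator (fun x' =>
          ∫ y in {y : ℚ_[2] | ‖y - (1 + (a : ℚ_[2]) - x')‖ ≤ 1 / 2}, ψ (b * x' * y) ∂μ) x := by
    intro x
    by_cases hx : x ∈ A
    · rw [Set.indicator_of_mem hx, ← integral_indicator (hSmeas _)]
      congr 1
      funext y
      by_cases hy : y ∈ {y : ℚ_[2] | ‖y - (1 + (a : ℚ_[2]) - x)‖ ≤ 1 / 2}
      · rw [Set.indicator_of_mem ((hmem x y hx).2 hy), Set.indicator_of_mem hy]
      · rw [Set.indicator_of_notMem (fun hm => hy ((hmem x y hx).1 hm)),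
          Set.indicator_of_notMem hy]
    · rw [Set.indicator_of_notMem hx]
      have hz : ∀ y : ℚ_[2],
          (MsetShift a).indicator (fun p => ψ (b * p.1 * p.2)) (x, y) = 0 := by
        intro y
        apply Set.indicator_of_notMem
        rintro ⟨h1, -, -⟩
        exact hx h1
      simp only [hz, integral_zero]
  simp_rw [inner_eq]
  rw [integral_indicator hAmeas]
  by_cases hb : ‖b‖ ≤ 1
  · rw [if_pos hb]
    have hconst : ∀ x ∈ A,
        (∫ y in {y : ℚ_[2] | ‖y - (1 + (a : ℚ_[2]) - x)‖ ≤ 1 / 2}, ψ (b * x * y) ∂μ)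
        = ((1 : ℝ) / 2) • ψ ((1 + 2 * (a : ℚ_[2])) / 4 * b) := by
      intro x hx
      have hxA : ‖x - 2⁻¹‖ ≤ 1 := hx
      have hval : ∀ y ∈ {y : ℚ_[2] | ‖y - (1 + (a : ℚ_[2]) - x)‖ ≤ 1 / 2},
          ψ (b * x * y) = ψ ((1 + 2 * (a : ℚ_[2])) / 4 * b) := by
        intro y hy
        have hy' : ‖y - (1 + (a : ℚ_[2]) - x)‖ ≤ 1 / 2 := hy
        have hxnorm : ‖x‖ ≤ 2 := by
          have hxe : x = (x - 2⁻¹) + 2⁻¹ := by ring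
          rw [hxe]
          exact le_trans (Padic.nonarchimedean _ _)
            (max_le (le_trans hxA one_le_two) (le_of_eq norm_half))
        have hxa : ‖x - 2⁻¹ - (a : ℚ_[2])‖ ≤ 1 := by
          have hxe : x - 2⁻¹ - (a : ℚ_[2]) = (x - 2⁻¹) + -(a : ℚ_[2]) := by ring
          rw [hxe]
          exact le_trans (Padic.nonarchimedean _ _)
            (max_le hxA (by rw [norm_neg]; exact hanorm))
        have hkey : ‖b * x * y - (1 + 2 * (a : ℚ_[2])) / 4 * b‖ ≤ 1 := by
          have hid : b * x * y - (1 + 2 * (a : ℚ_[2])) / 4 * b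
              = b * (x * (y - (1 + (a : ℚ_[2]) - x))
                + -((x - 2⁻¹) * (x - 2⁻¹ - (a : ℚ_[2])))) := by ring
          rw [hid, norm_mul]
          have h1 : ‖x * (y - (1 + (a : ℚ_[2]) - x))‖ ≤ 1 := by
            rw [norm_mul]
            nlinarith [norm_nonneg x, norm_nonneg (y - (1 + (a : ℚ_[2]) - x))]
          have h2 : ‖-((x - 2⁻¹) * (x - 2⁻¹ - (a : ℚ_[2])))‖ ≤ 1 := by
            rw [norm_neg, norm_mul]
            nlinarith [norm_nonneg (x - 2⁻¹), norm_nonneg (x - 2⁻¹ - (a : ℚ_[2]))]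
          have h3 := le_trans (Padic.nonarchimedean
            (x * (y - (1 + (a : ℚ_[2]) - x)))
            (-((x - 2⁻¹) * (x - 2⁻¹ - (a : ℚ_[2]))))) (max_le h1 h2)
          nlinarith [norm_nonneg b]
        have htriv := hψtriv _ hkey
        have hsplit : ψ (b * x * y) = ψ ((1 + 2 * (a : ℚ_[2])) / 4 * b)
            * ψ (b * x * y - (1 + 2 * (a : ℚ_[2])) / 4 * b) := by
          rw [← hψadd]
          congr 1
          ring
        rw [hsplit, htriv, mul_one]
      rw [setIntegral_congr_fun (hSmeas _) hval, setIntegral_const, measureReal_def,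
        meas_half_ball μ hμ]
      congr 1
      simp [ENNReal.toReal_div]
    rw [setIntegral_congr_fun hAmeas hconst, setIntegral_const, measureReal_def, meas_unit_ball μ hμ]
    simp only [ENNReal.toReal_one, one_smul]
    rw [Complex.real_smul]
    push_cast
    ring
  · rw [if_neg hb]
    have hzero : ∀ x ∈ A,
        (∫ y in {y : ℚ_[2] | ‖y - (1 + (a : ℚ_[2]) - x)‖ ≤ 1 / 2}, ψ (b * x * y) ∂μ)
        = 0 := by
      intro x hx
      have hxA : ‖x - 2⁻¹‖ ≤ 1 := hx
      have hb2 : 2 ≤ ‖b‖ := norm_ge_two hb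
      have hx2 : 2 ≤ ‖x‖ := by
        by_contra hc
        push_neg at hc
        have h1 : (2⁻¹ : ℚ_[2]) = x + -(x - 2⁻¹) := by ring
        have h2 : (2 : ℝ) ≤ max ‖x‖ ‖-(x - 2⁻¹)‖ := by
          have h3 := Padic.nonarchimedean x (-(x - 2⁻¹))
          rw [← h1, norm_half] at h3
          exact h3
        rw [norm_neg] at h2
        rcases max_cases ‖x‖ ‖x - 2⁻¹‖ with ⟨he, -⟩ | ⟨he, -⟩ <;> rw [he] at h2 <;> linarith
      have hβ : 4 ≤ ‖b * x‖ := by rw [norm_mul]; nlinarith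
      have hv := vanish μ ψ hψadd hψhalf (b * x) (1 + (a : ℚ_[2]) - x) hβ
      simpa [mul_assoc] using hv
    rw [setIntegral_congr_fun hAmeas hzero]
    simp
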